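/- Let d ≥ 5 and define Ā(u,u′;v,v′) := ⟨u−u′⟩^{2−d} ⟨u−v′⟩^{4−2d} ⟨u′−v⟩^{2−d} for u, u′, v, v′ ∈ ℤ^d. Then there exist constants c₁, c₂ > 0, depending only on d, such that for every m ≥ 1 and all x, y ∈ ℤ^d: Σ_{x₁, x₁′, …, x_{m−1}, x_{m−1}′ ∈ ℤ^d} ∏_{j=0}^{m−1} Ā(x_j, x_j′; x_{j+1}, x_{j+1}′) ≤ c₁ c₂^m ⟨y−x⟩^{−3(d−2)}, where by convention x₀ := x₀′ := x and x_m := x_m′ := y (for m = 1 the sum is empty and the left-hand side equals Ā(x,x;y,y)). -/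

import Mathlib

open scoped BigOperators

/-- Euclidean norm of a point of `ℤ^d`. -/
noncomputable def znorm {d : ℕ} (x : Fin d → ℤ) : ℝ :=
  Real.sqrt (∑ i, ((x i : ℝ)) ^ 2)

/-- `⟨x⟩ = max(|x|, 1)`. -/
noncomputable def zbra {d : ℕ} (x : Fin d → ℤ) : ℝ := max (znorm x) 1

/-- `Ā(u,u′;v,v′) := ⟨u−u′⟩^{2−d} ⟨u−v′⟩^{4−2d} ⟨u′−v⟩^{2−d}`, with the two pairs of
arguments bundled as `p = (u, u′)` and `q = (v, v′)`. -/
noncomputable def Abar {d : ℕ} (p q : (Fin d → ℤ) × (Fin d → ℤ)) : ℝ :=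
  zbra (p.1 - p.2) ^ ((2 : ℝ) - d) * zbra (p.1 - q.2) ^ ((4 : ℝ) - 2 * d) *
    zbra (p.2 - q.1) ^ ((2 : ℝ) - d)

/-- The sequence `(x₀,x₀′) = (x,x)`, `(x_j,x_j′) = w(j−1)` for `1 ≤ j ≤ m−1`,
and `(x_m,x_m′) = (y,y)`. -/
noncomputable def laceVertices {d : ℕ} (x y : Fin d → ℤ) (m : ℕ)
    (w : Fin (m - 1) → ((Fin d → ℤ) × (Fin d → ℤ))) (j : ℕ) :
    (Fin d → ℤ) × (Fin d → ℤ) :=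
  if j = 0 then (x, x) else if h : j - 1 < m - 1 then w ⟨j - 1, h⟩ else (y, y)


open scoped ENNReal

section basics
variable {d : ℕ}

lemma znorm_eq_norm (x : Fin d → ℤ) :
    znorm x = ‖(WithLp.equiv 2 (Fin d → ℝ)).symm (fun i => (x i : ℝ))‖ := by
  rw [EuclideanSpace.norm_eq]
  unfold znorm
  congr 1
  refine Finset.sum_congr rfl fun i _ => ?_
  rw [show ((WithLp.equiv 2 (Fin d → ℝ)).symm fun i => (x i : ℝ)).ofLp i = (x i : ℝ) from rfl,
    Real.norm_eq_abs, sq_abs]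

lemma znorm_nonneg (x : Fin d → ℤ) : 0 ≤ znorm x := Real.sqrt_nonneg _

lemma one_le_zbra (x : Fin d → ℤ) : 1 ≤ zbra x := le_max_right _ _

lemma zbra_pos (x : Fin d → ℤ) : 0 < zbra x := lt_of_lt_of_le one_pos (one_le_zbra x)

lemma zbra_neg (x : Fin d → ℤ) : zbra (-x) = zbra x := by
  unfold zbra znorm
  congr 2
  refine Finset.sum_congr rfl fun i _ => ?_
  have : (-x) i = -(x i) := rfl
  rw [this]
  push_cast
  ring

lemma znorm_add_le (x y : Fin d → ℤ) : znorm (x + y) ≤ znorm x + znorm y := by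
  rw [znorm_eq_norm, znorm_eq_norm, znorm_eq_norm]
  have : ((WithLp.equiv 2 (Fin d → ℝ)).symm (fun i => ((x + y) i : ℝ)))
      = (WithLp.equiv 2 (Fin d → ℝ)).symm (fun i => (x i : ℝ))
        + (WithLp.equiv 2 (Fin d → ℝ)).symm (fun i => (y i : ℝ)) := by
    apply (WithLp.equiv 2 (Fin d → ℝ)).injective
    funext i
    have h1 : ((WithLp.equiv 2 (Fin d → ℝ))
        (((WithLp.equiv 2 (Fin d → ℝ)).symm fun i => (x i:ℝ))
          + (WithLp.equiv 2 (Fin d → ℝ)).symm fun i => (y i:ℝ))) i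
        = (x i : ℝ) + (y i : ℝ) := rfl
    have h2 : ((WithLp.equiv 2 (Fin d → ℝ))
        ((WithLp.equiv 2 (Fin d → ℝ)).symm fun i => ((x+y) i : ℝ))) i
        = ((x+y) i : ℝ) := rfl
    rw [h1, h2]
    have : (x + y) i = x i + y i := rfl
    rw [this]
    push_cast
    ring
  rw [this]
  exact norm_add_le _ _

lemma zbra_add_le (x y : Fin d → ℤ) : zbra (x + y) ≤ zbra x + zbra y := by
  unfold zbra
  refine max_le ?_ ?_
  · exact le_trans (znorm_add_le x y)
      (add_le_add (le_max_left _ _) (le_max_left _ _))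
  · calc (1:ℝ) ≤ max (znorm x) 1 := le_max_right _ _
      _ ≤ _ := le_add_of_nonneg_right (le_trans zero_le_one (le_max_right _ _))

lemma zbra_coord_le (x : Fin d → ℤ) (i : Fin d) : max |(x i : ℝ)| 1 ≤ zbra x := by
  refine max_le ?_ (one_le_zbra x)
  calc |(x i : ℝ)| = Real.sqrt (((x i : ℝ))^2) := (Real.sqrt_sq_eq_abs _).symm
    _ ≤ znorm x := by
        apply Real.sqrt_le_sqrt
        exact Finset.single_le_sum (f := fun j => ((x j:ℝ))^2) (fun j _ => sq_nonneg _) (Finset.mem_univ i)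
    _ ≤ zbra x := le_max_left _ _

end basics

open scoped ENNReal

section eE
variable {d : ℕ}

noncomputable def eE (s : ℝ) (x : Fin d → ℤ) : ℝ≥0∞ :=
  ENNReal.ofReal (zbra x ^ (-s))

variable {s : ℝ}

lemma eE_le_one (hs : 0 ≤ s) (x : Fin d → ℤ) : eE s x ≤ 1 := by
  unfold eE
  rw [show (1:ℝ≥0∞) = ENNReal.ofReal 1 by simp]
  exact ENNReal.ofReal_le_ofReal
    (Real.rpow_le_one_of_one_le_of_nonpos (one_le_zbra x) (neg_nonpos.mpr hs))

lemma eE_zero_arg : eE s (0 : Fin d → ℤ) = 1 := by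
  unfold eE
  have h0 : znorm (0 : Fin d → ℤ) = 0 := by
    unfold znorm
    simp
  have : zbra (0 : Fin d → ℤ) = 1 := by
    unfold zbra; rw [h0]; simp
  rw [this, Real.one_rpow]; simp

lemma eE_neg (x : Fin d → ℤ) : eE s (-x) = eE s x := by
  unfold eE; rw [zbra_neg]

lemma eE_sub_comm (a b : Fin d → ℤ) : eE s (a - b) = eE s (b - a) := by
  rw [show a - b = -(b - a) by ring, eE_neg]

lemma eE_mul (x y : Fin d → ℤ) :
    eE s x * eE s y = ENNReal.ofReal (zbra x ^ (-s) * zbra y ^ (-s)) := by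
  unfold eE
  rw [ENNReal.ofReal_mul (Real.rpow_nonneg (zbra_pos x).le _)]

/-- the key extraction inequality -/
lemma eE_extract (hs : 0 ≤ s) (x y : Fin d → ℤ) (a b : ℕ) :
    eE s x ^ (a+1) * eE s y ^ (b+1) ≤
      ENNReal.ofReal (2 ^ s) * eE s (x + y) *
        (eE s x ^ a * eE s y ^ (b+1) + eE s x ^ (a+1) * eE s y ^ b) := by
  have key : ∀ z w : Fin d → ℤ, zbra w ≤ zbra z →
      eE s z ≤ ENNReal.ofReal (2 ^ s) * eE s (z + w) := by
    intro z w hzw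
    unfold eE
    rw [← ENNReal.ofReal_mul (by positivity)]
    apply ENNReal.ofReal_le_ofReal
    have h1 : zbra (z + w) ≤ 2 * zbra z := by
      calc zbra (z + w) ≤ zbra z + zbra w := zbra_add_le z w
        _ ≤ zbra z + zbra z := by linarith
        _ = 2 * zbra z := by ring
    have h2 : zbra (z + w) ^ (-s) ≥ (2 * zbra z) ^ (-s) :=
      Real.rpow_le_rpow_of_nonpos (zbra_pos _) h1 (neg_nonpos.mpr hs)
    have h3 : (2 * zbra z) ^ (-s) = 2 ^ (-s) * zbra z ^ (-s) :=
      Real.mul_rpow (by norm_num) (zbra_pos z).le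
    have h4 : (2:ℝ) ^ s * 2 ^ (-s) = 1 := by
      rw [← Real.rpow_add (by norm_num)]; simp
    calc zbra z ^ (-s) = (2 ^ s * 2 ^ (-s)) * zbra z ^ (-s) := by rw [h4, one_mul]
      _ = 2 ^ s * (2 ^ (-s) * zbra z ^ (-s)) := by ring
      _ = 2 ^ s * ((2 * zbra z) ^ (-s)) := by rw [h3]
      _ ≤ 2 ^ s * zbra (z + w) ^ (-s) := by
          apply mul_le_mul_of_nonneg_left h2 (by positivity)
  rcases le_total (zbra y) (zbra x) with h | h
  · have h1 : eE s x ≤ ENNReal.ofReal (2 ^ s) * eE s (x + y) := key x y h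
    calc eE s x ^ (a+1) * eE s y ^ (b+1)
        = eE s x * (eE s x ^ a * eE s y ^ (b+1)) := by ring
      _ ≤ (ENNReal.ofReal (2 ^ s) * eE s (x + y)) * (eE s x ^ a * eE s y ^ (b+1)) :=
          mul_le_mul' h1 le_rfl
      _ ≤ _ := mul_le_mul' le_rfl (le_add_of_nonneg_right zero_le)
  · have h1 : eE s y ≤ ENNReal.ofReal (2 ^ s) * eE s (x + y) := by
      rw [show x + y = y + x by ring]; exact key y x h
    calc eE s x ^ (a+1) * eE s y ^ (b+1)
        = eE s y * (eE s x ^ (a+1) * eE s y ^ b) := by ring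
      _ ≤ (ENNReal.ofReal (2 ^ s) * eE s (x + y)) * (eE s x ^ (a+1) * eE s y ^ b) :=
          mul_le_mul' h1 le_rfl
      _ ≤ _ := mul_le_mul' le_rfl (le_add_of_nonneg_left zero_le)

end eE

section sums
variable {d : ℕ} {s : ℝ}

/-- the basic bubble sum -/
noncomputable def Sv (s : ℝ) (d : ℕ) : ℝ≥0∞ := ∑' v : Fin d → ℤ, eE s v * eE s v

lemma tsum_translate (c : Fin d → ℤ) (f : (Fin d → ℤ) → ℝ≥0∞) :
    ∑' v : Fin d → ℤ, f (v - c) = ∑' v, f v :=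
  (Equiv.subRight c).tsum_eq f

lemma D2 (c₁ c₂ : Fin d → ℤ) :
    ∑' v : Fin d → ℤ, eE s (v - c₁) * eE s (v - c₂) ≤ 2 * Sv s d := by
  have hpt : ∀ v, eE s (v - c₁) * eE s (v - c₂) ≤
      eE s (v - c₁) * eE s (v - c₁) + eE s (v - c₂) * eE s (v - c₂) := by
    intro v
    rcases le_total (eE s (v - c₁)) (eE s (v - c₂)) with h | h
    · exact le_add_of_nonneg_of_le zero_le (mul_le_mul' h le_rfl)
    · exact le_add_of_le_of_nonneg (mul_le_mul' le_rfl h) zero_le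
  calc ∑' v, eE s (v - c₁) * eE s (v - c₂)
      ≤ ∑' v : Fin d → ℤ, (eE s (v - c₁) * eE s (v - c₁) + eE s (v - c₂) * eE s (v - c₂)) :=
        ENNReal.tsum_le_tsum hpt
    _ = (∑' v : Fin d → ℤ, eE s (v - c₁) * eE s (v - c₁))
        + ∑' v : Fin d → ℤ, eE s (v - c₂) * eE s (v - c₂) := ENNReal.tsum_add
    _ = Sv s d + Sv s d := by
        rw [tsum_translate c₁ (fun v => eE s v * eE s v),
          tsum_translate c₂ (fun v => eE s v * eE s v)]
        rfl
    _ = 2 * Sv s d := by ring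

/-- 1-d summability -/
lemma sum_one_dim {p : ℝ} (hp : 1 < p) :
    (∑' k : ℤ, ENNReal.ofReal ((max |(k:ℝ)| 1) ^ (-p))) ≠ ⊤ := by
  have hnonneg : ∀ k : ℤ, (0:ℝ) ≤ (max |(k:ℝ)| 1) ^ (-p) := by
    intro k; positivity
  have hsummat : Summable (fun n : ℕ => ((n:ℝ) + 1) ^ (-p)) := by
    have := Real.summable_nat_rpow_inv.mpr hp
    have h2 := (summable_nat_add_iff 1).mpr this
    apply h2.congr
    intro n
    rw [← Real.rpow_neg (by positivity), Real.rpow_neg (by positivity)]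
    push_cast
    rw [Real.rpow_neg (by positivity)]
  have hbound : ∀ n : ℕ, (max |((n:ℤ):ℝ)| 1) ^ (-p) ≤ 2 ^ p * ((n:ℝ) + 1) ^ (-p) := by
    intro n
    have h1 : ((n:ℝ) + 1) / 2 ≤ max |((n:ℤ):ℝ)| 1 := by
      rcases Nat.eq_zero_or_pos n with h | h
      · subst h; simp; norm_num
      · have : (1:ℝ) ≤ (n:ℝ) := by exact_mod_cast h
        calc ((n:ℝ) + 1) / 2 ≤ (n:ℝ) := by linarith
          _ = |((n:ℤ):ℝ)| := by
              rw [abs_of_nonneg (by positivity)]; push_cast; ring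
          _ ≤ _ := le_max_left _ _
    calc (max |((n:ℤ):ℝ)| 1) ^ (-p) ≤ (((n:ℝ) + 1) / 2) ^ (-p) :=
        Real.rpow_le_rpow_of_nonpos (by positivity) h1 (by linarith)
      _ = 2 ^ p * ((n:ℝ) + 1) ^ (-p) := by
          rw [Real.div_rpow (by positivity) (by norm_num : (0:ℝ) ≤ 2),
            Real.rpow_neg (by norm_num : (0:ℝ) ≤ 2) p]
          rw [div_eq_mul_inv, inv_inv]
          ring
  have hsumZ : Summable (fun k : ℤ => (max |(k:ℝ)| 1) ^ (-p)) := by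
    apply Summable.of_nat_of_neg
    · exact Summable.of_nonneg_of_le (fun n : ℕ => hnonneg (n:ℤ)) hbound
        (hsummat.mul_left _)
    · have heq : ∀ n : ℕ, (max |((-n:ℤ):ℝ)| 1) ^ (-p) = (max |((n:ℤ):ℝ)| 1) ^ (-p) := by
        intro n; push_cast; rw [abs_neg]
      rw [funext heq]
      exact Summable.of_nonneg_of_le (fun n : ℕ => hnonneg (n:ℤ)) hbound
        (hsummat.mul_left _)
  rw [← ENNReal.ofReal_tsum_of_nonneg hnonneg hsumZ]
  exact ENNReal.ofReal_ne_top

end sums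

section pl
lemma pi_tsum_prod (h : ℤ → ℝ≥0∞) :
    ∀ n : ℕ, (∑' v : Fin n → ℤ, ∏ i, h (v i)) = (∑' k : ℤ, h k) ^ n := by
  intro n
  induction n with
  | zero =>
      rw [pow_zero]
      rw [tsum_eq_single (fun (i : Fin 0) => (0:ℤ)) ?_]
      · simp
      · intro b' hb'
        exact absurd (funext fun i => absurd i.isLt (by omega)) hb'
  | succ n ih =>
      rw [← Equiv.tsum_eq (Fin.consEquiv (fun _ : Fin (n+1) => ℤ)) (fun v => ∏ i, h (v i))]
      have : ∀ p : ℤ × (Fin n → ℤ),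
          (∏ i, h ((Fin.consEquiv (fun _ : Fin (n+1) => ℤ) p) i))
            = h p.1 * ∏ i : Fin n, h (p.2 i) := by
        intro p
        rw [Fin.prod_univ_succ]
        simp [Fin.consEquiv]
      rw [tsum_congr this, ENNReal.tsum_prod']
      calc (∑' (a : ℤ) (b : Fin n → ℤ), h a * ∏ i, h (b i))
          = ∑' (a : ℤ), h a * ∑' (b : Fin n → ℤ), ∏ i, h (b i) := by
            refine tsum_congr fun a => ?_
            exact ENNReal.tsum_mul_left
        _ = (∑' k : ℤ, h k) * (∑' k : ℤ, h k) ^ n := by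
            rw [ih, ENNReal.tsum_mul_right]
        _ = (∑' k : ℤ, h k) ^ (n+1) := by ring

lemma Sv_ne_top {d : ℕ} {s : ℝ} (hd : 0 < d) (hs : 0 ≤ s) (hds : (d:ℝ) < 2 * s) :
    Sv s d ≠ ⊤ := by
  set p : ℝ := 2 * s / d with hp
  have hdpos : (0:ℝ) < d := by exact_mod_cast hd
  have hp1 : 1 < p := by
    rw [hp, lt_div_iff₀ hdpos]
    linarith
  have hppos : 0 ≤ p := by positivity
  have hpt : ∀ v : Fin d → ℤ, eE s v * eE s v ≤
      ∏ i, ENNReal.ofReal ((max |(v i : ℝ)| 1) ^ (-p)) := by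
    intro v
    rw [eE_mul, ← ENNReal.ofReal_prod_of_nonneg (fun i _ => by positivity)]
    apply ENNReal.ofReal_le_ofReal
    have hz := zbra_pos v
    have e1 : zbra v ^ (-s) * zbra v ^ (-s) = zbra v ^ (-(2*s)) := by
      rw [← Real.rpow_add hz]; ring_nf
    rw [e1]
    have e2 : zbra v ^ (-(2*s)) = ∏ _i : Fin d, zbra v ^ (-p) := by
      rw [Finset.prod_const, ← Real.rpow_natCast (zbra v ^ (-p)) _, ← Real.rpow_mul hz.le]
      congr 1
      rw [Finset.card_univ, Fintype.card_fin, hp, neg_mul, div_mul_cancel₀ _ hdpos.ne']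
    rw [e2]
    apply Finset.prod_le_prod (fun i _ => by positivity)
    intro i _
    exact Real.rpow_le_rpow_of_nonpos (by positivity) (zbra_coord_le v i)
      (neg_nonpos.mpr hppos)
  have hle : Sv s d ≤ (∑' k : ℤ, ENNReal.ofReal ((max |(k:ℝ)| 1) ^ (-p))) ^ d := by
    rw [← pi_tsum_prod]
    exact ENNReal.tsum_le_tsum hpt
  exact ne_top_of_le_ne_top (ENNReal.pow_ne_top (sum_one_dim hp1)) hle

end pl

section core
variable {d : ℕ} {s : ℝ}

local notation "G" => Fin d → ℤ

lemma one_le_K (hs : 0 ≤ s) : (1:ℝ≥0∞) ≤ ENNReal.ofReal (2 ^ s) := by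
  rw [show (1:ℝ≥0∞) = ENNReal.ofReal 1 by simp]
  exact ENNReal.ofReal_le_ofReal (Real.one_le_rpow (by norm_num) hs)

lemma shapeSI (c₁ c₂ c₃ c₄ : G) :
    ∑' q : G × G, (eE s (q.1 - c₁) * eE s (q.1 - c₂)) * (eE s (q.2 - c₃) * eE s (q.2 - c₄))
      ≤ (2 * Sv s d) * (2 * Sv s d) := by
  rw [ENNReal.tsum_prod']
  calc ∑' (a : G), ∑' (b : G), (eE s (a - c₁) * eE s (a - c₂)) * (eE s (b - c₃) * eE s (b - c₄))
      = ∑' (a : G), (eE s (a - c₁) * eE s (a - c₂)) * ∑' (b : G), (eE s (b - c₃) * eE s (b - c₄)) :=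
        tsum_congr fun a => ENNReal.tsum_mul_left
    _ = (∑' (a : G), (eE s (a - c₁) * eE s (a - c₂))) * ∑' (b : G), (eE s (b - c₃) * eE s (b - c₄)) :=
        ENNReal.tsum_mul_right
    _ ≤ _ := mul_le_mul' (D2 c₁ c₂) (D2 c₃ c₄)

lemma shapeSC (c₁ c₂ c₃ : G) :
    ∑' q : G × G, (eE s (q.1 - c₁) * eE s (q.1 - c₂)) * (eE s (q.2 - c₃) * eE s (q.1 - q.2))
      ≤ (2 * Sv s d) * (2 * Sv s d) := by
  rw [ENNReal.tsum_prod']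
  calc ∑' (a : G), ∑' (b : G), (eE s (a - c₁) * eE s (a - c₂)) * (eE s (b - c₃) * eE s (a - b))
      = ∑' (a : G), (eE s (a - c₁) * eE s (a - c₂)) * ∑' (b : G), (eE s (b - c₃) * eE s (b - a)) := by
        refine tsum_congr fun a => ?_
        rw [ENNReal.tsum_mul_left]
        congr 1
        exact tsum_congr fun b => by rw [eE_sub_comm a b]
    _ ≤ ∑' (a : G), (eE s (a - c₁) * eE s (a - c₂)) * (2 * Sv s d) :=
        ENNReal.tsum_le_tsum fun a => mul_le_mul' le_rfl (D2 c₃ a)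
    _ = (∑' (a : G), (eE s (a - c₁) * eE s (a - c₂))) * (2 * Sv s d) := ENNReal.tsum_mul_right
    _ ≤ _ := mul_le_mul' (D2 c₁ c₂) le_rfl

lemma shapeSC' (c₁ c₃ c₄ : G) :
    ∑' q : G × G, (eE s (q.1 - c₁) * eE s (q.1 - q.2)) * (eE s (q.2 - c₃) * eE s (q.2 - c₄))
      ≤ (2 * Sv s d) * (2 * Sv s d) := by
  rw [ENNReal.tsum_prod']
  rw [ENNReal.tsum_comm]
  calc ∑' (b : G), ∑' (a : G), (eE s (a - c₁) * eE s (a - b)) * (eE s (b - c₃) * eE s (b - c₄))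
      = ∑' (b : G), (∑' (a : G), (eE s (a - c₁) * eE s (a - b))) * (eE s (b - c₃) * eE s (b - c₄)) :=
        tsum_congr fun b => ENNReal.tsum_mul_right
    _ ≤ ∑' (b : G), (2 * Sv s d) * (eE s (b - c₃) * eE s (b - c₄)) :=
        ENNReal.tsum_le_tsum fun b => mul_le_mul' (D2 c₁ b) le_rfl
    _ = (2 * Sv s d) * ∑' (b : G), (eE s (b - c₃) * eE s (b - c₄)) := ENNReal.tsum_mul_left
    _ ≤ _ := mul_le_mul' le_rfl (D2 c₃ c₄)

end core

section coreabs

/-- Abstract pointwise core estimate. -/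
lemma corePtAbs (K F F' A B C D X U : ℝ≥0∞) (hK : 1 ≤ K)
    (i1 : A^2*B ≤ K*F*(A*B+A^2))
    (i2 : C*D^2 ≤ K*F'*(D^2+C*D))
    (i3 : A*B ≤ K*F*(B+A))
    (i4 : A^2*X ≤ K*U*(A*X+A^2))
    (i5 : U*D^2 ≤ K*F*(D^2+U*D))
    (i6 : C*D ≤ K*F'*(D+C))
    (i7 : A^2*B^2 ≤ K*F*(A*B^2+A^2*B))
    (i8 : A*B^2 ≤ K*F*(B^2+A*B)) :
    A^2*C*X*(D^2*B + D*B^2) ≤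
      K^4 * ( F*F*F' *
        ( ((B+A)*(X*(D*D)) + (B+A)*(X*(C*D)) + (A*X+A^2)*(D*D+U*D))
          + ((B^2+A*B)+(A*B+A^2))*((D+C)*X) )
        + F*F'*F' * ((D+C)*(A^2*X)) ) := by
  have pad : ∀ z : ℝ≥0∞, K^3*z ≤ K^4*z := by
    intro z
    calc K^3*z = 1*(K^3*z) := by ring
      _ ≤ K*(K^3*z) := mul_le_mul' hK le_rfl
      _ = K^4*z := by ring
  have hT1 : A^2*C*X*(D^2*B) ≤
      K^4*( F*F*F' * ((B+A)*(X*(D*D)) + (B+A)*(X*(C*D)) + (A*X+A^2)*(D*D+U*D))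
        + F*F'*F' * ((D+C)*(A^2*X)) ) := by
    have t3 : (A^2*X)*(D*D) ≤ K*(K*F*((A*X+A^2)*(D*D+U*D))) := by
      calc (A^2*X)*(D*D) ≤ (K*U*(A*X+A^2))*(D*D) := mul_le_mul' i4 le_rfl
        _ = K*((A*X+A^2)*(U*D^2)) := by ring
        _ ≤ K*((A*X+A^2)*(K*F*(D^2+U*D))) := by
            exact mul_le_mul' le_rfl (mul_le_mul' le_rfl i5)
        _ = K*(K*F*((A*X+A^2)*(D*D+U*D))) := by ring
    calc A^2*C*X*(D^2*B) = (A^2*B)*(C*D^2)*X := by ring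
      _ ≤ (K*F*(A*B+A^2))*(K*F'*(D^2+C*D))*X := mul_le_mul' (mul_le_mul' i1 i2) le_rfl
      _ = (K*K)*(F*F') *
          ( (A*B)*(X*(D*D)) + (A*B)*(X*(C*D)) + ((A^2*X)*(D*D)) + ((C*D)*(A^2*X)) ) := by
        ring
      _ ≤ (K*K)*(F*F') *
          ( (K*F*(B+A))*(X*(D*D)) + (K*F*(B+A))*(X*(C*D))
            + K*(K*F*((A*X+A^2)*(D*D+U*D))) + (K*F'*(D+C))*(A^2*X) ) := by
        refine mul_le_mul' le_rfl ?_
        refine add_le_add (add_le_add (add_le_add ?_ ?_) ?_) ?_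
        · exact mul_le_mul' i3 le_rfl
        · exact mul_le_mul' i3 le_rfl
        · exact t3
        · exact mul_le_mul' i6 le_rfl
      _ = K^3*(F*F*F' * ((B+A)*(X*(D*D)) + (B+A)*(X*(C*D))))
          + K^4*(F*F*F' * ((A*X+A^2)*(D*D+U*D)))
          + K^3*(F*F'*F' * ((D+C)*(A^2*X))) := by ring
      _ ≤ K^4*(F*F*F' * ((B+A)*(X*(D*D)) + (B+A)*(X*(C*D))))
          + K^4*(F*F*F' * ((A*X+A^2)*(D*D+U*D)))
          + K^4*(F*F'*F' * ((D+C)*(A^2*X))) :=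
        add_le_add (add_le_add (pad _) le_rfl) (pad _)
      _ = _ := by ring
  have hT2 : A^2*C*X*(D*B^2) ≤
      K^4*( F*F*F' * (((B^2+A*B)+(A*B+A^2))*((D+C)*X)) ) := by
    calc A^2*C*X*(D*B^2) = (A^2*B^2)*(C*D)*X := by ring
      _ ≤ (K*F*(A*B^2+A^2*B))*(K*F'*(D+C))*X := mul_le_mul' (mul_le_mul' i7 i6) le_rfl
      _ = (K*K)*(F*F') * ((A*B^2)*((D+C)*X) + (A^2*B)*((D+C)*X)) := by ring
      _ ≤ (K*K)*(F*F') * ((K*F*(B^2+A*B))*((D+C)*X) + (K*F*(A*B+A^2))*((D+C)*X)) := by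
        exact mul_le_mul' le_rfl (add_le_add (mul_le_mul' i8 le_rfl) (mul_le_mul' i1 le_rfl))
      _ = K^3*(F*F*F' * (((B^2+A*B)+(A*B+A^2))*((D+C)*X))) := by ring
      _ ≤ _ := pad _
  calc A^2*C*X*(D^2*B + D*B^2) = A^2*C*X*(D^2*B) + A^2*C*X*(D*B^2) := by ring
    _ ≤ _ := add_le_add hT1 hT2
    _ = _ := by ring

end coreabs

section core2
variable {d : ℕ} {s : ℝ}
local notation "G" => Fin d → ℤ
local notation "K" => ENNReal.ofReal (2 ^ s)

lemma corePt (hs : 0 ≤ s) (u u' yy v v' : G) :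
    eE s (u - v')^2 * eE s (u' - v) * eE s (v - v') *
      (eE s (v - yy)^2 * eE s (v' - yy) + eE s (v - yy) * eE s (v' - yy)^2)
    ≤ K^4 *
      ( eE s (u - yy) * eE s (u - yy) * eE s (u' - yy) *
        ( ((eE s (v' - yy) + eE s (v' - u)) * (eE s (v - v') * (eE s (v - yy) * eE s (v - yy)))
          + (eE s (v' - yy) + eE s (v' - u)) * (eE s (v - v') * (eE s (v - u') * eE s (v - yy)))
          + (eE s (v' - u) * eE s (v - v') + eE s (v' - u)^2) *
              (eE s (v - yy) * eE s (v - yy) + eE s (v - u) * eE s (v - yy)))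
          + ((eE s (v' - yy)^2 + eE s (v' - u) * eE s (v' - yy))
              + (eE s (v' - u) * eE s (v' - yy) + eE s (v' - u)^2)) *
            ((eE s (v - yy) + eE s (v - u')) * eE s (v - v')) )
      + eE s (u - yy) * eE s (u' - yy) * eE s (u' - yy) *
          ((eE s (v - yy) + eE s (v - u')) * (eE s (v' - u)^2 * eE s (v - v'))) ) := by
  have base := eE_extract (d := d) hs
  have i1 : eE s (v'-u)^2 * eE s (v'-yy) ≤
      K * eE s (u-yy) * (eE s (v'-u) * eE s (v'-yy) + eE s (v'-u)^2) := by
    have e1 := base (u - v') (v' - yy) 1 0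
    rw [sub_add_sub_cancel, eE_sub_comm u v'] at e1
    simpa using e1
  have i2 : eE s (v-u') * eE s (v-yy)^2 ≤
      K * eE s (u'-yy) * (eE s (v-yy)^2 + eE s (v-u') * eE s (v-yy)) := by
    have e1 := base (u' - v) (v - yy) 0 1
    rw [sub_add_sub_cancel, eE_sub_comm u' v] at e1
    simpa using e1
  have i3 : eE s (v'-u) * eE s (v'-yy) ≤
      K * eE s (u-yy) * (eE s (v'-yy) + eE s (v'-u)) := by
    have e1 := base (u - v') (v' - yy) 0 0
    rw [sub_add_sub_cancel, eE_sub_comm u v'] at e1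
    simpa using e1
  have i4 : eE s (v'-u)^2 * eE s (v-v') ≤
      K * eE s (v-u) * (eE s (v'-u) * eE s (v-v') + eE s (v'-u)^2) := by
    have e1 := base (u - v') (v' - v) 1 0
    rw [sub_add_sub_cancel, eE_sub_comm u v', eE_sub_comm v' v, eE_sub_comm u v] at e1
    simpa using e1
  have i5 : eE s (v-u) * eE s (v-yy)^2 ≤
      K * eE s (u-yy) * (eE s (v-yy)^2 + eE s (v-u) * eE s (v-yy)) := by
    have e1 := base (u - v) (v - yy) 0 1
    rw [sub_add_sub_cancel, eE_sub_comm u v] at e1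
    simpa using e1
  have i6 : eE s (v-u') * eE s (v-yy) ≤
      K * eE s (u'-yy) * (eE s (v-yy) + eE s (v-u')) := by
    have e1 := base (u' - v) (v - yy) 0 0
    rw [sub_add_sub_cancel, eE_sub_comm u' v] at e1
    simpa using e1
  have i7 : eE s (v'-u)^2 * eE s (v'-yy)^2 ≤
      K * eE s (u-yy) * (eE s (v'-u) * eE s (v'-yy)^2 + eE s (v'-u)^2 * eE s (v'-yy)) := by
    have e1 := base (u - v') (v' - yy) 1 1
    rw [sub_add_sub_cancel, eE_sub_comm u v'] at e1
    simpa using e1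
  have i8 : eE s (v'-u) * eE s (v'-yy)^2 ≤
      K * eE s (u-yy) * (eE s (v'-yy)^2 + eE s (v'-u) * eE s (v'-yy)) := by
    have e1 := base (u - v') (v' - yy) 0 1
    rw [sub_add_sub_cancel, eE_sub_comm u v'] at e1
    simpa using e1
  rw [eE_sub_comm u v', eE_sub_comm u' v]
  exact corePtAbs K (eE s (u-yy)) (eE s (u'-yy)) (eE s (v'-u)) (eE s (v'-yy))
    (eE s (v-u')) (eE s (v-yy)) (eE s (v-v')) (eE s (v-u)) (one_le_K hs)
    i1 i2 i3 i4 i5 i6 i7 i8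

end core2

section core3
variable {d : ℕ} {s : ℝ}
local notation "G" => Fin d → ℤ
local notation "K" => ENNReal.ofReal (2 ^ s)

set_option maxHeartbeats 1000000 in
lemma hPhi2 (u u' yy : G) :
    ∑' q : G × G,
      ((eE s (q.1 - yy) + eE s (q.1 - u')) * (eE s (q.2 - u)^2 * eE s (q.1 - q.2)))
      ≤ 2 * ((2 * Sv s d) * (2 * Sv s d)) := by
  calc ∑' q : G × G, ((eE s (q.1 - yy) + eE s (q.1 - u')) * (eE s (q.2 - u)^2 * eE s (q.1 - q.2)))
      = ∑' q : G × G,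
        ( (eE s (q.1 - yy) * eE s (q.1 - q.2)) * (eE s (q.2 - u) * eE s (q.2 - u))
        + (eE s (q.1 - u') * eE s (q.1 - q.2)) * (eE s (q.2 - u) * eE s (q.2 - u)) ) :=
        tsum_congr fun q => by ring
    _ = _ + _ := ENNReal.tsum_add
    _ ≤ (2 * Sv s d) * (2 * Sv s d) + (2 * Sv s d) * (2 * Sv s d) := add_le_add (shapeSC' yy u u) (shapeSC' u' u u)
    _ = _ := by ring


set_option maxHeartbeats 1000000 in
lemma hPhi13 (u u' yy : G) :
    ∑' q : G × G,
      ( ((eE s (q.2 - yy) + eE s (q.2 - u)) * (eE s (q.1 - q.2) * (eE s (q.1 - yy) * eE s (q.1 - yy)))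
        + (eE s (q.2 - yy) + eE s (q.2 - u)) * (eE s (q.1 - q.2) * (eE s (q.1 - u') * eE s (q.1 - yy)))
        + (eE s (q.2 - u) * eE s (q.1 - q.2) + eE s (q.2 - u)^2) *
            (eE s (q.1 - yy) * eE s (q.1 - yy) + eE s (q.1 - u) * eE s (q.1 - yy)))
        + ((eE s (q.2 - yy)^2 + eE s (q.2 - u) * eE s (q.2 - yy))
            + (eE s (q.2 - u) * eE s (q.2 - yy) + eE s (q.2 - u)^2)) *
          ((eE s (q.1 - yy) + eE s (q.1 - u')) * eE s (q.1 - q.2)) )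
      ≤ 16 * ((2 * Sv s d) * (2 * Sv s d)) := by
  calc _ = ∑' q : G × G,
      ( (eE s (q.1 - yy) * eE s (q.1 - yy)) * (eE s (q.2 - yy) * eE s (q.1 - q.2))
      + (eE s (q.1 - yy) * eE s (q.1 - yy)) * (eE s (q.2 - u) * eE s (q.1 - q.2))
      + (eE s (q.1 - u') * eE s (q.1 - yy)) * (eE s (q.2 - yy) * eE s (q.1 - q.2))
      + (eE s (q.1 - u') * eE s (q.1 - yy)) * (eE s (q.2 - u) * eE s (q.1 - q.2))
      + (eE s (q.1 - yy) * eE s (q.1 - yy)) * (eE s (q.2 - u) * eE s (q.1 - q.2))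
      + (eE s (q.1 - u) * eE s (q.1 - yy)) * (eE s (q.2 - u) * eE s (q.1 - q.2))
      + (eE s (q.1 - yy) * eE s (q.1 - yy)) * (eE s (q.2 - u) * eE s (q.2 - u))
      + (eE s (q.1 - u) * eE s (q.1 - yy)) * (eE s (q.2 - u) * eE s (q.2 - u))
      + (eE s (q.1 - yy) * eE s (q.1 - q.2)) * (eE s (q.2 - yy) * eE s (q.2 - yy))
      + (eE s (q.1 - u') * eE s (q.1 - q.2)) * (eE s (q.2 - yy) * eE s (q.2 - yy))
      + (eE s (q.1 - yy) * eE s (q.1 - q.2)) * (eE s (q.2 - u) * eE s (q.2 - yy))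
      + (eE s (q.1 - u') * eE s (q.1 - q.2)) * (eE s (q.2 - u) * eE s (q.2 - yy))
      + (eE s (q.1 - yy) * eE s (q.1 - q.2)) * (eE s (q.2 - u) * eE s (q.2 - yy))
      + (eE s (q.1 - u') * eE s (q.1 - q.2)) * (eE s (q.2 - u) * eE s (q.2 - yy))
      + (eE s (q.1 - yy) * eE s (q.1 - q.2)) * (eE s (q.2 - u) * eE s (q.2 - u))
      + (eE s (q.1 - u') * eE s (q.1 - q.2)) * (eE s (q.2 - u) * eE s (q.2 - u)) ) :=
      tsum_congr fun q => by ring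
    _ = _ := by simp only [ENNReal.tsum_add]
    _ ≤ ((2 * Sv s d) * (2 * Sv s d)) + ((2 * Sv s d) * (2 * Sv s d)) + ((2 * Sv s d) * (2 * Sv s d)) + ((2 * Sv s d) * (2 * Sv s d)) + ((2 * Sv s d) * (2 * Sv s d)) + ((2 * Sv s d) * (2 * Sv s d)) + ((2 * Sv s d) * (2 * Sv s d)) + ((2 * Sv s d) * (2 * Sv s d)) + ((2 * Sv s d) * (2 * Sv s d)) + ((2 * Sv s d) * (2 * Sv s d)) + ((2 * Sv s d) * (2 * Sv s d)) + ((2 * Sv s d) * (2 * Sv s d)) + ((2 * Sv s d) * (2 * Sv s d)) + ((2 * Sv s d) * (2 * Sv s d)) + ((2 * Sv s d) * (2 * Sv s d)) + ((2 * Sv s d) * (2 * Sv s d)) :=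
      (add_le_add (add_le_add (add_le_add (add_le_add (add_le_add (add_le_add (add_le_add (add_le_add (add_le_add (add_le_add (add_le_add (add_le_add (add_le_add (add_le_add (add_le_add (shapeSC yy yy yy) (shapeSC yy yy u)) (shapeSC u' yy yy)) (shapeSC u' yy u)) (shapeSC yy yy u)) (shapeSC u yy u)) (shapeSI yy yy u u)) (shapeSI u yy u u)) (shapeSC' yy yy yy)) (shapeSC' u' yy yy)) (shapeSC' yy u yy)) (shapeSC' u' u yy)) (shapeSC' yy u yy)) (shapeSC' u' u yy)) (shapeSC' yy u u)) (shapeSC' u' u u))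
    _ = _ := by ring


set_option maxHeartbeats 1000000 in
lemma core (hs : 0 ≤ s) (u u' yy : G) :
    ∑' q : G × G, eE s (u - q.2)^2 * eE s (u' - q.1) * eE s (q.1 - q.2) *
        (eE s (q.1 - yy)^2 * eE s (q.2 - yy) + eE s (q.1 - yy) * eE s (q.2 - yy)^2)
    ≤ (64 * K^4 * (Sv s d + 1)^2) *
        (eE s (u - yy)^2 * eE s (u' - yy) + eE s (u - yy) * eE s (u' - yy)^2) := by
  have step1 : ∑' q : G × G, eE s (u - q.2)^2 * eE s (u' - q.1) * eE s (q.1 - q.2) *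
        (eE s (q.1 - yy)^2 * eE s (q.2 - yy) + eE s (q.1 - yy) * eE s (q.2 - yy)^2)
      ≤ K^4 * ( eE s (u - yy) * eE s (u - yy) * eE s (u' - yy) *
          ∑' q : G × G,
          ( ((eE s (q.2 - yy) + eE s (q.2 - u)) * (eE s (q.1 - q.2) * (eE s (q.1 - yy) * eE s (q.1 - yy)))
            + (eE s (q.2 - yy) + eE s (q.2 - u)) * (eE s (q.1 - q.2) * (eE s (q.1 - u') * eE s (q.1 - yy)))
            + (eE s (q.2 - u) * eE s (q.1 - q.2) + eE s (q.2 - u)^2) *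
                (eE s (q.1 - yy) * eE s (q.1 - yy) + eE s (q.1 - u) * eE s (q.1 - yy)))
            + ((eE s (q.2 - yy)^2 + eE s (q.2 - u) * eE s (q.2 - yy))
                + (eE s (q.2 - u) * eE s (q.2 - yy) + eE s (q.2 - u)^2)) *
              ((eE s (q.1 - yy) + eE s (q.1 - u')) * eE s (q.1 - q.2)) )
        + eE s (u - yy) * eE s (u' - yy) * eE s (u' - yy) *
          ∑' q : G × G,
            ((eE s (q.1 - yy) + eE s (q.1 - u')) * (eE s (q.2 - u)^2 * eE s (q.1 - q.2))) ) := by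
    calc _ ≤ ∑' q : G × G, K^4 *
          ( eE s (u - yy) * eE s (u - yy) * eE s (u' - yy) *
            ( ((eE s (q.2 - yy) + eE s (q.2 - u)) * (eE s (q.1 - q.2) * (eE s (q.1 - yy) * eE s (q.1 - yy)))
              + (eE s (q.2 - yy) + eE s (q.2 - u)) * (eE s (q.1 - q.2) * (eE s (q.1 - u') * eE s (q.1 - yy)))
              + (eE s (q.2 - u) * eE s (q.1 - q.2) + eE s (q.2 - u)^2) *
                  (eE s (q.1 - yy) * eE s (q.1 - yy) + eE s (q.1 - u) * eE s (q.1 - yy)))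
              + ((eE s (q.2 - yy)^2 + eE s (q.2 - u) * eE s (q.2 - yy))
                  + (eE s (q.2 - u) * eE s (q.2 - yy) + eE s (q.2 - u)^2)) *
                ((eE s (q.1 - yy) + eE s (q.1 - u')) * eE s (q.1 - q.2)) )
          + eE s (u - yy) * eE s (u' - yy) * eE s (u' - yy) *
              ((eE s (q.1 - yy) + eE s (q.1 - u')) * (eE s (q.2 - u)^2 * eE s (q.1 - q.2))) ) :=
        ENNReal.tsum_le_tsum fun q => corePt hs u u' yy q.1 q.2
      _ = _ := by
        rw [ENNReal.tsum_mul_left, ENNReal.tsum_add, ENNReal.tsum_mul_left, ENNReal.tsum_mul_left]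
  refine le_trans step1 ?_
  have h13 := hPhi13 (d := d) (s := s) u u' yy
  have h2 := hPhi2 (d := d) (s := s) u u' yy
  calc _ ≤ K^4 * ( eE s (u - yy) * eE s (u - yy) * eE s (u' - yy)
          * (16 * ((2 * Sv s d) * (2 * Sv s d)))
        + eE s (u - yy) * eE s (u' - yy) * eE s (u' - yy)
          * (2 * ((2 * Sv s d) * (2 * Sv s d))) ) :=
      mul_le_mul' le_rfl (add_le_add (mul_le_mul' le_rfl h13) (mul_le_mul' le_rfl h2))
    _ = (64 * K^4 * (Sv s d * Sv s d)) * (eE s (u - yy) * eE s (u - yy) * eE s (u' - yy))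
        + (8 * K^4 * (Sv s d * Sv s d)) * (eE s (u - yy) * eE s (u' - yy) * eE s (u' - yy)) := by
      ring
    _ ≤ (64 * K^4 * ((Sv s d + 1) * (Sv s d + 1))) * (eE s (u - yy) * eE s (u - yy) * eE s (u' - yy))
        + (64 * K^4 * ((Sv s d + 1) * (Sv s d + 1))) * (eE s (u - yy) * eE s (u' - yy) * eE s (u' - yy)) := by
      refine add_le_add (mul_le_mul' (mul_le_mul' le_rfl ?_) le_rfl)
        (mul_le_mul' (mul_le_mul' (mul_le_mul' ?_ le_rfl) ?_) le_rfl)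
      · exact mul_le_mul' le_self_add le_self_add
      · norm_num
      · exact mul_le_mul' le_self_add le_self_add
    _ = _ := by ring

end core3

section chain
variable {d : ℕ}
local notation "G" => Fin d → ℤ
local notation "B" => (Fin d → ℤ) × (Fin d → ℤ)

noncomputable def AbE {d : ℕ} (p q : (Fin d → ℤ) × (Fin d → ℤ)) : ℝ≥0∞ :=
  ENNReal.ofReal (Abar p q)

noncomputable def Vtx {d : ℕ} (p yp : (Fin d → ℤ) × (Fin d → ℤ)) (n : ℕ)
    (w : Fin n → ((Fin d → ℤ) × (Fin d → ℤ))) (j : ℕ) : (Fin d → ℤ) × (Fin d → ℤ) :=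
  if j = 0 then p else if h : j - 1 < n then w ⟨j - 1, h⟩ else yp

noncomputable def CP {d : ℕ} (n : ℕ) (p yp : (Fin d → ℤ) × (Fin d → ℤ))
    (w : Fin n → ((Fin d → ℤ) × (Fin d → ℤ))) : ℝ≥0∞ :=
  ∏ j ∈ Finset.range (n+1), AbE (Vtx p yp n w j) (Vtx p yp n w (j+1))

noncomputable def RR {d : ℕ} (n : ℕ) (p yp : (Fin d → ℤ) × (Fin d → ℤ)) : ℝ≥0∞ :=
  ∑' w : Fin n → ((Fin d → ℤ) × (Fin d → ℤ)), CP n p yp w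

lemma Vtx_zero (p yp : B) (n : ℕ) (w : Fin n → B) : Vtx p yp n w 0 = p := by
  simp [Vtx]

lemma Vtx_shift (p yp q : B) (n : ℕ) (w : Fin n → B) (j : ℕ) :
    Vtx p yp (n+1) (Fin.cons q w) (j+1) = Vtx q yp n w j := by
  unfold Vtx
  rcases j with _ | k
  · simp
  · simp only [Nat.succ_ne_zero, if_false]
    rcases Nat.lt_or_ge k n with h | h
    · rw [dif_pos (by omega : k+1+1-1 < n+1), dif_pos (by omega : k+1-1 < n)]
      exact Fin.cons_succ (α := fun _ : Fin (n+1) => B) q w ⟨k, h⟩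
    · rw [dif_neg (by omega), dif_neg (by omega)]

lemma CP_cons (n : ℕ) (p yp q : B) (w : Fin n → B) :
    CP (n+1) p yp (Fin.cons q w) = AbE p q * CP n q yp w := by
  unfold CP
  rw [Finset.prod_range_succ']
  have h1 : Vtx p yp (n+1) (Fin.cons q w) (0+1) = q := by
    rw [Vtx_shift, Vtx_zero]
  rw [Vtx_zero, h1, mul_comm]
  congr 1
  exact Finset.prod_congr rfl fun i _ => by rw [Vtx_shift, Vtx_shift]

lemma RR_zero (p yp : B) : RR 0 p yp = AbE p yp := by
  unfold RR
  rw [tsum_eq_single (default : Fin 0 → B) (fun b hb => absurd (Subsingleton.elim b default) hb)]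
  unfold CP
  rw [Finset.prod_range_one, Vtx_zero,
    show Vtx p yp 0 (default : Fin 0 → B) (0+1) = yp from by simp [Vtx]]

lemma RR_succ (n : ℕ) (p yp : B) :
    RR (n+1) p yp = ∑' q : B, AbE p q * RR n q yp := by
  unfold RR
  rw [← Equiv.tsum_eq (Fin.consEquiv (fun _ : Fin (n+1) => B)) (CP (n+1) p yp)]
  have hcp : ∀ z : B × (Fin n → B),
      CP (n+1) p yp (Fin.consEquiv (fun _ : Fin (n+1) => B) z) = AbE p z.1 * CP n z.1 yp z.2 :=
    fun z => CP_cons n p yp z.1 z.2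
  rw [tsum_congr hcp, ENNReal.tsum_prod']
  exact tsum_congr fun q =>
    ENNReal.tsum_mul_left (a := AbE p q) (f := fun w => CP n q yp w)

end chain

section rrle
variable {d : ℕ}
local notation "G" => Fin d → ℤ
local notation "B" => (Fin d → ℤ) × (Fin d → ℤ)

lemma AbE_eq (p q : B) :
    AbE p q = eE ((d:ℝ)-2) (p.1-p.2) * eE ((d:ℝ)-2) (p.1-q.2)^2 * eE ((d:ℝ)-2) (p.2-q.1) := by
  unfold AbE Abar eE
  rw [show (2:ℝ) - (d:ℝ) = -((d:ℝ)-2) by ring,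
    show (4:ℝ) - 2*(d:ℝ) = -((d:ℝ)-2) + -((d:ℝ)-2) by ring,
    Real.rpow_add (zbra_pos _)]
  rw [pow_two, ← ENNReal.ofReal_mul (Real.rpow_nonneg (zbra_pos _).le _),
    ← ENNReal.ofReal_mul (Real.rpow_nonneg (zbra_pos _).le _),
    ← ENNReal.ofReal_mul (mul_nonneg (Real.rpow_nonneg (zbra_pos _).le _)
      (mul_nonneg (Real.rpow_nonneg (zbra_pos _).le _) (Real.rpow_nonneg (zbra_pos _).le _)))]

lemma one_le_CC (hs : (0:ℝ) ≤ (d:ℝ)-2) :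
    (1:ℝ≥0∞) ≤ 64 * (ENNReal.ofReal (2 ^ ((d:ℝ)-2)))^4 * (Sv ((d:ℝ)-2) d + 1)^2 := by
  calc (1:ℝ≥0∞) = 1 * 1 * 1 := by ring
    _ ≤ 64 * (ENNReal.ofReal (2 ^ ((d:ℝ)-2)))^4 * (Sv ((d:ℝ)-2) d + 1)^2 := by
      refine mul_le_mul' (mul_le_mul' (by norm_num) ?_) ?_
      · calc (1:ℝ≥0∞) = 1^4 := by ring
          _ ≤ _ := pow_le_pow_left' (one_le_K hs) 4
      · calc (1:ℝ≥0∞) = 1^2 := by ring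
          _ ≤ _ := pow_le_pow_left' le_add_self 2

set_option maxHeartbeats 1000000 in
lemma RR_le (hs : (0:ℝ) ≤ (d:ℝ)-2) (n : ℕ) (p : B) (y : G) :
    RR n p (y, y) ≤
      (64 * (ENNReal.ofReal (2 ^ ((d:ℝ)-2)))^4 * (Sv ((d:ℝ)-2) d + 1)^2)^(n+1) *
        (eE ((d:ℝ)-2) (p.1-p.2) *
          (eE ((d:ℝ)-2) (p.1-y)^2 * eE ((d:ℝ)-2) (p.2-y)
            + eE ((d:ℝ)-2) (p.1-y) * eE ((d:ℝ)-2) (p.2-y)^2)) := by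
  induction n generalizing p with
  | zero =>
      rw [RR_zero, AbE_eq, pow_one]
      calc eE ((d:ℝ)-2) (p.1-p.2) * eE ((d:ℝ)-2) (p.1-y)^2 * eE ((d:ℝ)-2) (p.2-y)
          = 1 * (eE ((d:ℝ)-2) (p.1-p.2) * (eE ((d:ℝ)-2) (p.1-y)^2 * eE ((d:ℝ)-2) (p.2-y))) := by
            ring
        _ ≤ (64 * (ENNReal.ofReal (2 ^ ((d:ℝ)-2)))^4 * (Sv ((d:ℝ)-2) d + 1)^2) *
            (eE ((d:ℝ)-2) (p.1-p.2) *
              (eE ((d:ℝ)-2) (p.1-y)^2 * eE ((d:ℝ)-2) (p.2-y)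
                + eE ((d:ℝ)-2) (p.1-y) * eE ((d:ℝ)-2) (p.2-y)^2)) :=
          mul_le_mul' (one_le_CC hs) (mul_le_mul' le_rfl le_self_add)
  | succ n ih =>
      rw [RR_succ]
      calc ∑' q : B, AbE p q * RR n q (y, y)
          ≤ ∑' q : B, AbE p q *
              ((64 * (ENNReal.ofReal (2 ^ ((d:ℝ)-2)))^4 * (Sv ((d:ℝ)-2) d + 1)^2)^(n+1) *
                (eE ((d:ℝ)-2) (q.1-q.2) *
                  (eE ((d:ℝ)-2) (q.1-y)^2 * eE ((d:ℝ)-2) (q.2-y)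
                    + eE ((d:ℝ)-2) (q.1-y) * eE ((d:ℝ)-2) (q.2-y)^2))) :=
            ENNReal.tsum_le_tsum fun q => mul_le_mul' le_rfl (ih q)
        _ = (64 * (ENNReal.ofReal (2 ^ ((d:ℝ)-2)))^4 * (Sv ((d:ℝ)-2) d + 1)^2)^(n+1) *
            (eE ((d:ℝ)-2) (p.1-p.2) *
              ∑' q : B, eE ((d:ℝ)-2) (p.1 - q.2)^2 * eE ((d:ℝ)-2) (p.2 - q.1) *
                eE ((d:ℝ)-2) (q.1 - q.2) *
                (eE ((d:ℝ)-2) (q.1 - y)^2 * eE ((d:ℝ)-2) (q.2 - y)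
                  + eE ((d:ℝ)-2) (q.1 - y) * eE ((d:ℝ)-2) (q.2 - y)^2)) := by
            calc _ = ∑' q : B,
                ((64 * (ENNReal.ofReal (2 ^ ((d:ℝ)-2)))^4 * (Sv ((d:ℝ)-2) d + 1)^2)^(n+1)
                    * eE ((d:ℝ)-2) (p.1-p.2)) *
                  (eE ((d:ℝ)-2) (p.1 - q.2)^2 * eE ((d:ℝ)-2) (p.2 - q.1) *
                    eE ((d:ℝ)-2) (q.1 - q.2) *
                    (eE ((d:ℝ)-2) (q.1 - y)^2 * eE ((d:ℝ)-2) (q.2 - y)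
                      + eE ((d:ℝ)-2) (q.1 - y) * eE ((d:ℝ)-2) (q.2 - y)^2)) :=
                tsum_congr fun q => by rw [AbE_eq]; ring
              _ = _ := by rw [ENNReal.tsum_mul_left, mul_assoc]
        _ ≤ (64 * (ENNReal.ofReal (2 ^ ((d:ℝ)-2)))^4 * (Sv ((d:ℝ)-2) d + 1)^2)^(n+1) *
            (eE ((d:ℝ)-2) (p.1-p.2) *
              ((64 * (ENNReal.ofReal (2 ^ ((d:ℝ)-2)))^4 * (Sv ((d:ℝ)-2) d + 1)^2) *
                (eE ((d:ℝ)-2) (p.1-y)^2 * eE ((d:ℝ)-2) (p.2-y)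
                  + eE ((d:ℝ)-2) (p.1-y) * eE ((d:ℝ)-2) (p.2-y)^2))) :=
            mul_le_mul' le_rfl (mul_le_mul' le_rfl (core hs p.1 p.2 y))
        _ = _ := by ring

end rrle

lemma Abar_nonneg {d : ℕ} (p q : (Fin d → ℤ) × (Fin d → ℤ)) : 0 ≤ Abar p q := by
  unfold Abar
  have h1 := zbra_pos (p.1 - p.2)
  have h2 := zbra_pos (p.1 - q.2)
  have h3 := zbra_pos (p.2 - q.1)
  exact mul_nonneg (mul_nonneg (Real.rpow_nonneg h1.le _) (Real.rpow_nonneg h2.le _))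
    (Real.rpow_nonneg h3.le _)

set_option maxHeartbeats 1000000 in
/-- Diagrammatic estimate: there exist `c₁, c₂ > 0` depending only on
`d ≥ 5` such that for all `m ≥ 1` and all `x, y ∈ ℤ^d`,
`Σ_{x₁,x₁′,…,x_{m−1},x_{m−1}′} ∏_{j=0}^{m−1} Ā(x_j,x_j′;x_{j+1},x_{j+1}′)
  ≤ c₁ c₂^m ⟨y−x⟩^{−3(d−2)}` (with `x₀ = x₀′ = x`, `x_m = x_m′ = y`). -/
theorem stmt_13 (d : ℕ) (hd : 5 ≤ d) :
    ∃ c₁ > (0 : ℝ), ∃ c₂ > (0 : ℝ), ∀ m : ℕ, 1 ≤ m → ∀ x y : Fin d → ℤ,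
      Summable (fun w : Fin (m - 1) → ((Fin d → ℤ) × (Fin d → ℤ)) =>
        ∏ j ∈ Finset.range m,
          Abar (laceVertices x y m w j) (laceVertices x y m w (j + 1))) ∧
      (∑' w : Fin (m - 1) → ((Fin d → ℤ) × (Fin d → ℤ)),
        ∏ j ∈ Finset.range m,
          Abar (laceVertices x y m w j) (laceVertices x y m w (j + 1)))
        ≤ c₁ * c₂ ^ m * zbra (y - x) ^ (-(3 : ℝ) * ((d : ℝ) - 2)) := by
  have hdR : (5:ℝ) ≤ (d:ℝ) := by exact_mod_cast hd
  have hs : (0:ℝ) ≤ (d:ℝ) - 2 := by linarith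
  have hSfin : Sv ((d:ℝ)-2) d ≠ ⊤ :=
    Sv_ne_top (by omega) hs (by linarith)
  set CC : ℝ≥0∞ := 64 * (ENNReal.ofReal (2 ^ ((d:ℝ)-2)))^4 * (Sv ((d:ℝ)-2) d + 1)^2 with hCC
  have hCCtop : CC ≠ ⊤ := by
    rw [hCC]
    refine ENNReal.mul_ne_top (ENNReal.mul_ne_top (by norm_num) ?_) ?_
    · exact ENNReal.pow_ne_top ENNReal.ofReal_ne_top
    · exact ENNReal.pow_ne_top (ENNReal.add_ne_top.mpr ⟨hSfin, ENNReal.one_ne_top⟩)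
  have hCC1 : (1:ℝ≥0∞) ≤ CC := one_le_CC hs
  refine ⟨2, by norm_num, CC.toReal, ?_, ?_⟩
  · exact ENNReal.toReal_pos (fun h0 => by simp [h0] at hCC1) hCCtop
  intro m hm x y
  obtain ⟨n, rfl⟩ : ∃ n, m = n + 1 := ⟨m - 1, by omega⟩
  -- identify the real product with the toReal of the ENNReal product
  have h_lv : ∀ (w : Fin (n+1-1) → ((Fin d → ℤ) × (Fin d → ℤ))) (j : ℕ),
      laceVertices x y (n+1) w j = Vtx (x,x) (y,y) n w j := fun w j => rfl
  have h_prod : ∀ w : Fin (n+1-1) → ((Fin d → ℤ) × (Fin d → ℤ)),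
      (∏ j ∈ Finset.range (n+1),
          Abar (laceVertices x y (n+1) w j) (laceVertices x y (n+1) w (j+1)))
        = (CP n (x,x) (y,y) w).toReal := by
    intro w
    unfold CP
    rw [ENNReal.toReal_prod]
    refine Finset.prod_congr rfl fun j _ => ?_
    rw [h_lv w j, h_lv w (j+1)]
    exact (ENNReal.toReal_ofReal (Abar_nonneg _ _)).symm
  have hCPne : ∀ w : Fin n → ((Fin d → ℤ) × (Fin d → ℤ)), CP n (x,x) (y,y) w ≠ ⊤ := by
    intro w
    unfold CP
    exact (ENNReal.prod_lt_top fun j _ => ENNReal.ofReal_lt_top).ne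
  have hRRle := RR_le hs n (x,x) y
  have hBne : (CC^(n+1) *
      (eE ((d:ℝ)-2) ((x,x).1-(x,x).2) *
        (eE ((d:ℝ)-2) ((x,x).1-y)^2 * eE ((d:ℝ)-2) ((x,x).2-y)
          + eE ((d:ℝ)-2) ((x,x).1-y) * eE ((d:ℝ)-2) ((x,x).2-y)^2))) ≠ ⊤ := by
    refine ENNReal.mul_ne_top (ENNReal.pow_ne_top hCCtop) (ENNReal.mul_ne_top ?_ ?_)
    · exact ENNReal.ofReal_ne_top
    · refine ENNReal.add_ne_top.mpr ⟨?_, ?_⟩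
      · exact ENNReal.mul_ne_top (ENNReal.pow_ne_top ENNReal.ofReal_ne_top) ENNReal.ofReal_ne_top
      · exact ENNReal.mul_ne_top ENNReal.ofReal_ne_top (ENNReal.pow_ne_top ENNReal.ofReal_ne_top)
  have hRRne : RR n (x,x) (y,y) ≠ ⊤ := ne_top_of_le_ne_top hBne hRRle
  constructor
  · rw [funext h_prod]
    exact ENNReal.summable_toReal hRRne
  · rw [funext h_prod]
    -- compute the bound
    have hb2 : CC^(n+1) *
        (eE ((d:ℝ)-2) ((x,x).1-(x,x).2) *
          (eE ((d:ℝ)-2) ((x,x).1-y)^2 * eE ((d:ℝ)-2) ((x,x).2-y)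
            + eE ((d:ℝ)-2) ((x,x).1-y) * eE ((d:ℝ)-2) ((x,x).2-y)^2))
        = CC^(n+1) * (2 * ENNReal.ofReal (zbra (y-x) ^ (-(3:ℝ) * ((d:ℝ)-2)))) := by
      have h0 : eE ((d:ℝ)-2) ((x,x).1-(x,x).2) = 1 := by
        show eE ((d:ℝ)-2) (x - x) = 1
        rw [sub_self]
        exact eE_zero_arg
      have hE3 : eE ((d:ℝ)-2) (x-y)^2 * eE ((d:ℝ)-2) (x-y)
            + eE ((d:ℝ)-2) (x-y) * eE ((d:ℝ)-2) (x-y)^2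
          = 2 * ENNReal.ofReal (zbra (y-x) ^ (-(3:ℝ) * ((d:ℝ)-2))) := by
        have e3 : eE ((d:ℝ)-2) (x-y) ^ (3:ℕ)
            = ENNReal.ofReal (zbra (y-x) ^ (-(3:ℝ) * ((d:ℝ)-2))) := by
          unfold eE
          rw [← ENNReal.ofReal_pow (Real.rpow_nonneg (zbra_pos _).le _)]
          congr 1
          rw [← Real.rpow_natCast (zbra (x-y) ^ (-((d:ℝ)-2))) 3, ← Real.rpow_mul (zbra_pos _).le]
          rw [show x - y = -(y-x) by ring, zbra_neg]
          norm_num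
          ring_nf
        calc eE ((d:ℝ)-2) (x-y)^2 * eE ((d:ℝ)-2) (x-y)
              + eE ((d:ℝ)-2) (x-y) * eE ((d:ℝ)-2) (x-y)^2
            = 2 * eE ((d:ℝ)-2) (x-y) ^ (3:ℕ) := by ring
          _ = _ := by rw [e3]
      show CC^(n+1) * ((eE ((d:ℝ)-2) (x - x)) *
          (eE ((d:ℝ)-2) (x-y)^2 * eE ((d:ℝ)-2) (x-y)
            + eE ((d:ℝ)-2) (x-y) * eE ((d:ℝ)-2) (x-y)^2)) = _
      rw [sub_self, eE_zero_arg, one_mul, hE3]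
    calc ∑' w : Fin (n+1-1) → ((Fin d → ℤ) × (Fin d → ℤ)), (CP n (x,x) (y,y) w).toReal
        = (RR n (x,x) (y,y)).toReal := (ENNReal.tsum_toReal_eq hCPne).symm
      _ ≤ (CC^(n+1) *
            (eE ((d:ℝ)-2) ((x,x).1-(x,x).2) *
              (eE ((d:ℝ)-2) ((x,x).1-y)^2 * eE ((d:ℝ)-2) ((x,x).2-y)
                + eE ((d:ℝ)-2) ((x,x).1-y) * eE ((d:ℝ)-2) ((x,x).2-y)^2))).toReal :=
          ENNReal.toReal_mono hBne hRRle
      _ = (CC^(n+1) * (2 * ENNReal.ofReal (zbra (y-x) ^ (-(3:ℝ) * ((d:ℝ)-2))))).toReal := by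
          rw [hb2]
      _ = 2 * CC.toReal ^ (n+1) * zbra (y-x) ^ (-(3:ℝ) * ((d:ℝ)-2)) := by
          simp only [ENNReal.toReal_mul, ENNReal.toReal_pow, ENNReal.toReal_ofNat,
            ENNReal.toReal_ofReal
              (Real.rpow_nonneg (zbra_pos (y-x)).le (-(3:ℝ) * ((d:ℝ)-2)))]
          ring
      _ = _ := by norm_num
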